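/- Let A be a simple unital C*-algebra, let G be a finite group, and let α : G → Aut(A) be an action of G on A. Suppose that for every finite subset F ⊂ A, every ε > 0, and every nonzero positive x ∈ A, there exist nonzero pairwise orthogonal projections e_g ∈ A (g ∈ G) such that, with e = Σ_{g∈G} e_g: (1) ‖e_g a − a e_g‖ < ε for all g ∈ G and all a ∈ F; (2) ‖α_g(e_h) − e_{gh}‖ < ε for all g, h ∈ G; (3) 1 − e ≾ x. Then α has the tracial Rokhlin property. -/

import Mathlib

open Filter Topology

/-- Cuntz subequivalence: `a ≾ b` iff there is a sequence `vₙ` with `‖a - vₙ b vₙ*‖ → 0`. -/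
def CuntzSubeq {A : Type*} [NonUnitalRing A] [StarRing A] [Norm A] (a b : A) : Prop :=
  ∃ v : ℕ → A, Filter.Tendsto (fun n => ‖a - v n * b * star (v n)‖) Filter.atTop (nhds (0 : ℝ))

/-- A projection in a C*-algebra: a self-adjoint idempotent. -/
def IsProjection {A : Type*} [Mul A] [Star A] (p : A) : Prop :=
  star p = p ∧ p * p = p

/-- The tracial Rokhlin property for an action `α` of a finite group `G` on a
unital C*-algebra `A` (where each `α g` is moreover assumed to be a *-automorphism). -/
def HasTracialRokhlin {A G : Type*} [CStarAlgebra A] [PartialOrder A] [StarOrderedRing A]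
    [Group G] [Fintype G] (α : G →* (A ≃ₐ[ℂ] A)) : Prop :=
  ∀ (F : Finset A) (ε : ℝ), 0 < ε → ∀ x : A, 0 ≤ x → ‖x‖ = 1 →
    ∃ f : G → A,
      (∀ g, IsProjection (f g)) ∧
      (∀ g h, g ≠ h → f g * f h = 0) ∧
      (∀ g, ∀ a ∈ F, ‖f g * a - a * f g‖ < ε) ∧
      (∀ g h, ‖α g (f h) - f (g * h)‖ < ε) ∧
      CuntzSubeq ((1 : A) - ∑ g, f g) x ∧
      1 - ε < ‖(∑ g, f g) * x * (∑ g, f g)‖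

section Aux

variable {A : Type*} [CStarAlgebra A]

/-- In a (topologically) simple unital C*-algebra, the identity is approximated by
elements of the algebraic ideal generated by any nonzero element. -/
private lemma ideal_approx
    (hA : ∀ I : TwoSidedIdeal A, IsClosed (I : Set A) → I = ⊥ ∨ I = ⊤)
    {y : A} (hy : y ≠ 0) :
    ∃ (n : ℕ) (a b : Fin n → A), ‖1 - ∑ i, a i * y * b i‖ < 1/2 := by
  set T : Set A := {z | ∃ (n : ℕ) (a b : Fin n → A), z = ∑ i, a i * y * b i} with hT
  have h0 : (0 : A) ∈ T := ⟨0, Fin.elim0, Fin.elim0, by simp⟩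
  have hadd : ∀ {z w : A}, z ∈ T → w ∈ T → z + w ∈ T := by
    rintro z w ⟨n, a, b, rfl⟩ ⟨m, a', b', rfl⟩
    refine ⟨n + m, Fin.append a a', Fin.append b b', ?_⟩
    rw [Fin.sum_univ_add]
    simp [Fin.append_left, Fin.append_right]
  have hneg : ∀ {z : A}, z ∈ T → -z ∈ T := by
    rintro z ⟨n, a, b, rfl⟩
    exact ⟨n, fun i => -(a i), b, by simp [Finset.sum_neg_distrib]⟩
  have hmull : ∀ (c : A) {z : A}, z ∈ T → c * z ∈ T := by
    rintro c z ⟨n, a, b, rfl⟩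
    refine ⟨n, fun i => c * a i, b, ?_⟩
    rw [Finset.mul_sum]
    simp [mul_assoc]
  have hmulr : ∀ (c : A) {z : A}, z ∈ T → z * c ∈ T := by
    rintro c z ⟨n, a, b, rfl⟩
    refine ⟨n, a, fun i => b i * c, ?_⟩
    rw [Finset.sum_mul]
    simp [mul_assoc]
  have cadd : ∀ {z w : A}, z ∈ closure T → w ∈ closure T → z + w ∈ closure T :=
    fun hz hw => map_mem_closure₂ continuous_add hz hw fun _ ha _ hb => hadd ha hb
  have cneg : ∀ {z : A}, z ∈ closure T → -z ∈ closure T :=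
    fun hz => map_mem_closure continuous_neg hz fun _ ha => hneg ha
  have cmull : ∀ {c z : A}, z ∈ closure T → c * z ∈ closure T := fun {c z} hz =>
    map_mem_closure (f := fun w : A => c * w) (continuous_const.mul continuous_id)
      hz fun _ ha => hmull c ha
  have cmulr : ∀ {c z : A}, z ∈ closure T → z * c ∈ closure T := fun {c z} hz =>
    map_mem_closure (f := fun w : A => w * c) (continuous_id.mul continuous_const)
      hz fun _ ha => hmulr c ha
  set I : TwoSidedIdeal A := TwoSidedIdeal.mk' (closure T) (subset_closure h0)
    cadd cneg (fun hz => cmull hz) (fun hz => cmulr hz) with hI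
  have hmem : ∀ z : A, z ∈ I ↔ z ∈ closure T := fun z =>
    TwoSidedIdeal.mem_mk' (closure T) _ _ _ _ _ z
  have hclosed : IsClosed (I : Set A) := by
    have : (I : Set A) = closure T := TwoSidedIdeal.coe_mk' _ _ _ _ _ _
    rw [this]; exact isClosed_closure
  rcases hA I hclosed with hbot | htop
  · exfalso
    have hyT : y ∈ T := ⟨1, 1, 1, by simp⟩
    have : y ∈ I := (hmem y).mpr (subset_closure hyT)
    rw [hbot] at this
    exact hy ((TwoSidedIdeal.mem_bot (R := A)).mp this)
  · have h1 : (1 : A) ∈ closure T := by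
      rw [← hmem, htop]; exact TwoSidedIdeal.mem_top (R := A)
    rw [Metric.mem_closure_iff] at h1
    obtain ⟨z, hzT, hdist⟩ := h1 (1/2) (by norm_num)
    obtain ⟨n, a, b, rfl⟩ := hzT
    exact ⟨n, a, b, by rwa [dist_eq_norm] at hdist⟩

private lemma norm_pow_two_pow_self (c : A) (hc : IsSelfAdjoint c) (m : ℕ) :
    ‖c ^ 2 ^ m‖ = ‖c‖ ^ 2 ^ m := by
  have h := hc.nnnorm_pow_two_pow m
  rw [← coe_nnnorm, h, NNReal.coe_pow, coe_nnnorm]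

private lemma pow_comm_bound (e x : A) (δ : ℝ) (he : ‖e‖ ≤ 1) (hx : ‖x‖ ≤ 1) (hee : e * e = e)
    (hδ : ‖e * x - x * e‖ ≤ δ) (hδ0 : 0 ≤ δ) :
    ∀ k : ℕ, 1 ≤ k → ‖(e * x * e) ^ k - e * x ^ k * e‖ ≤ (k - 1 : ℕ) * δ := by
  intro k hk
  induction k, hk using Nat.le_induction with
  | base => simp [pow_one]
  | succ k hk ih =>
    have hc : ‖e * x * e‖ ≤ 1 := by
      refine le_trans norm_mul₃_le ?_
      nlinarith [norm_nonneg e, norm_nonneg x, mul_le_one₀ he (norm_nonneg x) hx]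
    have hxk : ‖x ^ k‖ ≤ 1 :=
      le_trans (norm_pow_le' x hk) (pow_le_one₀ (norm_nonneg x) hx)
    have hcross : (e*x^k*e)*(e*x*e) - e*x^(k+1)*e = e*x^k*((e*x - x*e)*e) := by
      have hL : (e*x^k*e)*(e*x*e) = e*x^k*(e*(x*e)) := by
        have h3 : (e*x^k*e)*(e*x*e) = e*x^k*((e*e)*(x*e)) := by noncomm_ring
        rw [h3, hee]
      have hR : e*x^k*((e*x - x*e)*e) = e*x^k*(e*(x*e)) - e*x^k*(x*e) := by
        have h3 : e*x^k*((e*x - x*e)*e) = e*x^k*(e*(x*e)) - e*x^k*(x*(e*e)) := by noncomm_ring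
        rw [h3, hee]
      have hE : e*x^(k+1)*e = e*x^k*(x*e) := by noncomm_ring
      rw [hL, hE, hR]
    have key : (e*x*e)^(k+1) - e*x^(k+1)*e
        = ((e*x*e)^k - e*x^k*e) * (e*x*e) + ((e*x^k*e)*(e*x*e) - e*x^(k+1)*e) := by
      noncomm_ring
    rw [key, hcross]
    calc ‖((e*x*e)^k - e*x^k*e) * (e*x*e) + e*x^k*((e*x - x*e)*e)‖
        ≤ ‖((e*x*e)^k - e*x^k*e) * (e*x*e)‖ + ‖e*x^k*((e*x - x*e)*e)‖ := norm_add_le _ _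
      _ ≤ ((k-1 : ℕ) * δ) * 1 + 1 * 1 * (δ * 1) := by
          gcongr ?_ + ?_
          · exact le_trans (norm_mul_le _ _) (by gcongr)
          · refine le_trans norm_mul₃_le ?_
            gcongr
            exact le_trans (norm_mul_le _ _) (by gcongr)
      _ ≤ (k + 1 - 1 : ℕ) * δ := by
          rcases k with _ | k
          · omega
          · push_cast [Nat.succ_sub_one]
            nlinarith

variable [PartialOrder A] [StarOrderedRing A]

private lemma cfc_key (x : A) (hx : 0 ≤ x) (θ : ℝ) (hθ' : θ < 1) (k : ℕ) :
    ((1-θ)^k : ℝ) • (cfc (fun t : ℝ => max (t - (1-θ)) 0) x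
        * cfc (fun t : ℝ => max (t - (1-θ)) 0) x)
      ≤ cfc (fun t : ℝ => max (t - (1-θ)) 0) x * x ^ k
          * cfc (fun t : ℝ => max (t - (1-θ)) 0) x := by
  set f : ℝ → ℝ := fun t => max (t - (1-θ)) 0 with hf
  have hcf : ContinuousOn f (spectrum ℝ x) := by fun_prop
  have hsa : IsSelfAdjoint x := .of_nonneg hx
  have h1 : cfc f x * cfc f x = cfc (fun t => f t * f t) x := (cfc_mul _ _ x).symm
  have h2 : cfc f x * x ^ k * cfc f x = cfc (fun t => f t * t ^ k * f t) x := by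
    conv_lhs => rw [← cfc_pow_id (R := ℝ) x k, ← cfc_mul f _ x, ← cfc_mul _ f x]
  rw [h1, h2, ← cfc_smul ((1-θ)^k : ℝ) _ x]
  apply cfc_mono ?_ (by fun_prop) (by fun_prop)
  intro t ht
  have ht0 : 0 ≤ t := (StarOrderedRing.nonneg_iff_spectrum_nonneg (R := ℝ) x).mp hx t ht
  simp only [smul_eq_mul]
  rcases le_or_gt t (1-θ) with h | h
  · have : f t = 0 := by simp [hf]; linarith
    simp [this]
  · have hfk : (1-θ)^k ≤ t^k := pow_le_pow_left₀ (by linarith) h.le k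
    have hf0 : 0 ≤ f t := le_max_right _ _
    calc (1-θ)^k * (f t * f t) ≤ t^k * (f t * f t) :=
          mul_le_mul_of_nonneg_right hfk (by positivity)
      _ = f t * t^k * f t := by ring

end Aux

set_option maxHeartbeats 4000000 in
theorem tracialRokhlin_of_nonzero_projections
    {A G : Type*} [CStarAlgebra A] [PartialOrder A] [StarOrderedRing A]
    (hA : ∀ I : TwoSidedIdeal A, IsClosed (I : Set A) → I = ⊥ ∨ I = ⊤)
    [Group G] [Fintype G] (α : G →* (A ≃ₐ[ℂ] A))
    (hα : ∀ (g : G) (a : A), α g (star a) = star (α g a))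
    (hyp : ∀ (F : Finset A) (ε : ℝ), 0 < ε → ∀ x : A, 0 ≤ x → x ≠ 0 →
      ∃ e : G → A,
        (∀ g, IsProjection (e g)) ∧ (∀ g, e g ≠ 0) ∧
        (∀ g h, g ≠ h → e g * e h = 0) ∧
        (∀ g, ∀ a ∈ F, ‖e g * a - a * e g‖ < ε) ∧
        (∀ g h, ‖α g (e h) - e (g * h)‖ < ε) ∧
        CuntzSubeq ((1 : A) - ∑ g, e g) x) :
    HasTracialRokhlin α := by
  classical
  intro F ε₀ hε₀ x hx hxnorm
  have hxne : x ≠ 0 := by intro h; rw [h, norm_zero] at hxnorm; norm_num at hxnorm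
  have : Nontrivial A := nontrivial_of_ne x 0 hxne
  have hxn1 : ‖x‖ ≤ 1 := le_of_eq hxnorm
  have hxsa : IsSelfAdjoint x := .of_nonneg hx
  -- effective tolerance
  set ε : ℝ := min ε₀ (1/2) with hεdef
  have hε : 0 < ε := lt_min hε₀ (by norm_num)
  have hεle : ε ≤ ε₀ := min_le_left _ _
  have hεhalf : ε ≤ 1/2 := min_le_right _ _
  set θ : ℝ := ε/4 with hθdef
  have hθpos : 0 < θ := by positivity
  have hθ8 : θ ≤ 1/8 := by rw [hθdef]; linarith
  -- the peak element y
  set f : ℝ → ℝ := fun t => max (t - (1-θ)) 0 with hfdef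
  set y : A := cfc f x with hydef
  have hy0 : 0 ≤ y := cfc_nonneg (fun t _ => le_max_right _ _)
  have hysa : IsSelfAdjoint y := .of_nonneg hy0
  have hyne : y ≠ 0 := by
    intro h
    have h1 : (1:ℝ) ∈ spectrum ℝ x := by
      simpa [hxnorm] using CStarAlgebra.norm_mem_spectrum_of_nonneg hx
    have hcont : ContinuousOn f (spectrum ℝ x) := by fun_prop
    have hmap := cfc_map_spectrum (R := ℝ) f x
    rw [← hydef, h] at hmap
    have h2 : f 1 ∈ spectrum ℝ (0 : A) := hmap ▸ Set.mem_image_of_mem _ h1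
    rw [spectrum.zero_eq] at h2
    have : f 1 = 0 := by simpa using h2
    rw [hfdef] at this
    simp at this
    linarith
  have hynorm : ‖y‖ ≤ 1 := by
    apply norm_cfc_le one_pos.le
    intro t ht
    have ht1 : t ≤ 1 :=
      le_trans ((Real.le_norm_self t).trans (spectrum.norm_le_norm_of_mem ht)) hxn1
    rw [Real.norm_eq_abs, abs_of_nonneg (le_max_right _ _)]
    exact max_le (by linarith) (by linarith)
  clear_value ε θ f y
  -- simplicity: approximate the unit in the ideal generated by y
  obtain ⟨n, a, b, hab⟩ := ideal_approx hA hyne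
  set S : ℝ := ∑ i, ‖a i‖ with hSdef
  set Cm : ℝ := ∑ i, ‖a i‖ * ‖b i‖ with hCmdef
  have hS0 : 0 ≤ S := Finset.sum_nonneg fun _ _ => norm_nonneg _
  have hCm0 : 0 ≤ Cm := Finset.sum_nonneg fun _ _ => by positivity
  set C : ℝ := Cm + 1 with hCdef
  have hC : 0 < C := by positivity
  set κ : ℝ := 1/(4*C) with hκdef
  have hκ : 0 < κ := by positivity
  clear_value S Cm C κ
  -- choose the exponent k = 2 ^ m₀
  have hr0 : (0:ℝ) ≤ (1-2*θ)/(1-θ) := by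
    apply div_nonneg <;> linarith
  have hr1 : (1-2*θ)/(1-θ) < 1 := by
    rw [div_lt_one (by linarith)]; linarith
  obtain ⟨m0, hm0⟩ := exists_pow_lt_of_lt_one (show (0:ℝ) < κ^2 by positivity) hr1
  set k : ℕ := 2 ^ m0 with hkdef
  have hk1 : 1 ≤ k := Nat.one_le_two_pow
  have hkm0 : m0 ≤ k := (Nat.lt_two_pow_self (n := m0)).le
  have hkr : ((1-2*θ)/(1-θ))^k ≤ κ^2 :=
    le_trans (pow_le_pow_of_le_one hr0 hr1.le hkm0) hm0.le
  have hpowkey : ((1-2*θ):ℝ)^k ≤ κ^2 * (1-θ)^k := by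
    have h := mul_le_mul_of_nonneg_right hkr (pow_nonneg (by linarith : (0:ℝ) ≤ 1-θ) k)
    rwa [div_pow, div_mul_cancel₀] at h
    exact pow_ne_zero _ (ne_of_gt (by linarith))
  set M2 : ℝ := (1-2*θ)^k - (1-3*θ)^k with hM2def
  have hM2 : 0 < M2 := by
    rw [hM2def]
    have : ((1-3*θ):ℝ)^k < (1-2*θ)^k :=
      pow_lt_pow_left₀ (by linarith) (by linarith) (Nat.one_le_iff_ne_zero.mp hk1)
    linarith
  clear_value k M2
  -- the commutator tolerance δ
  set δ : ℝ := min (min ε (1/(4*(S+1)))) (M2/(k+1)) with hδdef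
  have hδpos : 0 < δ := by
    apply lt_min (lt_min hε (one_div_pos.mpr (by linarith)))
    exact div_pos hM2 (by positivity)
  have hδε : δ ≤ ε := le_trans (min_le_left _ _) (min_le_left _ _)
  have hδS : δ ≤ 1/(4*(S+1)) := le_trans (min_le_left _ _) (min_le_right _ _)
  have hδM : δ ≤ M2/(k+1) := min_le_right _ _
  set N : ℕ := Fintype.card G with hNdef
  have hN : 0 < N := Fintype.card_pos
  have hNR : (0:ℝ) < N := by exact_mod_cast hN
  set δ' : ℝ := δ / N with hδ'def
  have hδ'pos : 0 < δ' := div_pos hδpos hNR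
  have hδ'δ : δ' ≤ δ := by
    rw [hδ'def]
    exact div_le_self hδpos.le (by exact_mod_cast hN)
  clear_value δ N δ'
  -- invoke the hypothesis
  set F' : Finset A := insert x (insert y (F ∪ Finset.image b Finset.univ)) with hF'def
  obtain ⟨e, heproj, hene, horth, hcomm, hequiv, hcuntz⟩ := hyp F' δ' hδ'pos x hx hxne
  set E : A := ∑ g, e g with hEdef
  -- basic facts about E
  have hEsa : star E = E := by
    rw [hEdef, star_sum]
    exact Finset.sum_congr rfl fun g _ => (heproj g).1
  have hEE : E * E = E := by
    rw [hEdef, Finset.sum_mul_sum]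
    refine Finset.sum_congr rfl fun g _ => ?_
    rw [Finset.sum_eq_single g (fun h _ hne => horth g h (Ne.symm hne)) (by simp)]
    exact (heproj g).2
  have hEe1 : E * e 1 = e 1 := by
    rw [hEdef, Finset.sum_mul]
    rw [Finset.sum_eq_single 1 (fun g _ hne => horth g 1 hne) (by simp)]
    exact (heproj 1).2
  have hEne : E ≠ 0 := by
    intro h
    rw [h, zero_mul] at hEe1
    exact hene 1 hEe1.symm
  have hEnorm : ‖E‖ = 1 := by
    have h1 : ‖E‖ * ‖E‖ = ‖E‖ := by
      rw [← CStarRing.norm_star_mul_self (x := E), hEsa, hEE]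
    have h2 : ‖E‖ ≠ 0 := norm_ne_zero_iff.mpr hEne
    have h3 : ‖E‖ * ‖E‖ = 1 * ‖E‖ := by rw [one_mul, h1]
    exact mul_right_cancel₀ h2 h3
  have hEn1 : ‖E‖ ≤ 1 := le_of_eq hEnorm
  -- commutator bounds for E
  have hcommE : ∀ z ∈ F', ‖E * z - z * E‖ ≤ δ := by
    intro z hz
    have hsum : E * z - z * E = ∑ g, (e g * z - z * e g) := by
      rw [hEdef, Finset.sum_mul, Finset.mul_sum, ← Finset.sum_sub_distrib]
    rw [hsum]
    calc ‖∑ g, (e g * z - z * e g)‖ ≤ ∑ g : G, ‖e g * z - z * e g‖ :=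
          norm_sum_le _ _
      _ ≤ ∑ _g : G, δ' := Finset.sum_le_sum fun g _ => (hcomm g z hz).le
      _ = N * δ' := by rw [Finset.sum_const]; simp [hNdef, nsmul_eq_mul]
      _ = δ := by rw [hδ'def]; field_simp
  have hxF' : x ∈ F' := Finset.mem_insert_self _ _
  have hyF' : y ∈ F' := Finset.mem_insert_of_mem (Finset.mem_insert_self _ _)
  have hbF' : ∀ i, b i ∈ F' := fun i =>
    Finset.mem_insert_of_mem (Finset.mem_insert_of_mem
      (Finset.mem_union_right _ (Finset.mem_image_of_mem b (Finset.mem_univ i))))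
  have hFF' : F ⊆ F' := fun z hz =>
    Finset.mem_insert_of_mem (Finset.mem_insert_of_mem (Finset.mem_union_left _ hz))
  clear_value F' E
  have hEx : ‖E * x - x * E‖ ≤ δ := hcommE x hxF'
  have hEy : ‖E * y - y * E‖ ≤ δ := hcommE y hyF'
  -- the κ estimate : κ ≤ ‖y * E‖
  have hyE : κ ≤ ‖y * E‖ := by
    set z : A := ∑ i, a i * y * b i with hzdef
    set W : A := ∑ i, (a i * y) * (E * b i) with hWdef
    clear_value z W
    have e1 : ‖E - z * E‖ < 1/2 := by
      have : E - z * E = (1 - z) * E := by noncomm_ring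
      rw [this]
      calc ‖(1 - z) * E‖ ≤ ‖1 - z‖ * ‖E‖ := norm_mul_le _ _
        _ ≤ ‖1 - z‖ * 1 := by gcongr
        _ < 1/2 := by rw [mul_one]; exact hab
    have e2 : ‖z * E - W‖ ≤ δ * S := by
      have hrw : z * E - W = ∑ i, (a i * y) * (b i * E - E * b i) := by
        rw [hzdef, hWdef, Finset.sum_mul, ← Finset.sum_sub_distrib]
        refine Finset.sum_congr rfl fun i _ => ?_
        noncomm_ring
      rw [hrw]
      calc ‖∑ i, (a i * y) * (b i * E - E * b i)‖
          ≤ ∑ i, ‖(a i * y) * (b i * E - E * b i)‖ := norm_sum_le _ _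
        _ ≤ ∑ i, ‖a i‖ * δ := by
            refine Finset.sum_le_sum fun i _ => ?_
            calc ‖(a i * y) * (b i * E - E * b i)‖
                ≤ ‖a i * y‖ * ‖b i * E - E * b i‖ := norm_mul_le _ _
              _ ≤ (‖a i‖ * ‖y‖) * ‖b i * E - E * b i‖ := by
                  gcongr; exact norm_mul_le _ _
              _ ≤ (‖a i‖ * 1) * δ := by
                  gcongr
                  rw [norm_sub_rev]
                  exact hcommE (b i) (hbF' i)
              _ = ‖a i‖ * δ := by ring
        _ = δ * S := by
            rw [hSdef, Finset.mul_sum]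
            exact Finset.sum_congr rfl fun i _ => mul_comm _ _
    have e3 : ‖W‖ ≤ ‖y * E‖ * Cm := by
      rw [hWdef]
      calc ‖∑ i, (a i * y) * (E * b i)‖ ≤ ∑ i, ‖(a i * y) * (E * b i)‖ := norm_sum_le _ _
        _ ≤ ∑ i, ‖y * E‖ * (‖a i‖ * ‖b i‖) := by
            refine Finset.sum_le_sum fun i _ => ?_
            have hrwi : (a i * y) * (E * b i) = a i * (y * E) * b i := by noncomm_ring
            rw [hrwi]
            calc ‖a i * (y * E) * b i‖ ≤ ‖a i‖ * ‖y * E‖ * ‖b i‖ := norm_mul₃_le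
              _ = ‖y * E‖ * (‖a i‖ * ‖b i‖) := by ring
        _ = ‖y * E‖ * Cm := by
            rw [hCmdef]
            exact (Finset.mul_sum _ _ _).symm
    have hδS' : δ * S ≤ 1/4 := by
      have h1 : δ * S ≤ (1/(4*(S+1))) * S := by
        apply mul_le_mul_of_nonneg_right hδS hS0
      have h2 : (1/(4*(S+1))) * S ≤ 1/4 := by
        rw [div_mul_eq_mul_div, one_mul, div_le_iff₀ (by linarith : (0:ℝ) < 4*(S+1))]
        linarith
      linarith
    have htot : 1 < 1/2 + δ * S + ‖y * E‖ * Cm := by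
      have : ‖E‖ ≤ ‖E - z*E‖ + ‖z*E - W‖ + ‖W‖ := by
        have h1 : E = (E - z*E) + (z*E - W) + W := by abel
        calc ‖E‖ = ‖(E - z*E) + (z*E - W) + W‖ := by rw [← h1]
          _ ≤ ‖(E - z*E) + (z*E - W)‖ + ‖W‖ := norm_add_le _ _
          _ ≤ ‖E - z*E‖ + ‖z*E - W‖ + ‖W‖ := by gcongr; exact norm_add_le _ _
      rw [hEnorm] at this
      calc (1:ℝ) ≤ ‖E - z*E‖ + ‖z*E - W‖ + ‖W‖ := this
        _ < 1/2 + δ * S + ‖y * E‖ * Cm := by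
            have := e1; have := e2; have := e3
            linarith
    have hge : 1/4 ≤ ‖y * E‖ * Cm := by linarith
    have : 1/4 ≤ ‖y * E‖ * C := by
      rw [hCdef, mul_add, mul_one]
      linarith only [hge, norm_nonneg (y * E)]
    rw [hκdef, div_le_iff₀ (by linarith : (0:ℝ) < 4*C)]
    have h4 : ‖y * E‖ * (4 * C) = 4 * (‖y * E‖ * C) := by ring
    linarith
  -- the norm lower bound chain
  set c : A := E * x * E with hcdef
  clear_value c
  have hcsa : IsSelfAdjoint c := by
    rw [hcdef, IsSelfAdjoint]
    rw [star_mul, star_mul, hEsa, hxsa.star_eq]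
    noncomm_ring
  have hcn1 : ‖c‖ ≤ 1 := by
    rw [hcdef]
    refine le_trans norm_mul₃_le ?_
    exact mul_le_one₀ (mul_le_one₀ hEn1 (norm_nonneg x) hxn1) (norm_nonneg E) hEn1
  have hxkn : ‖x ^ k‖ ≤ 1 :=
    le_trans (norm_pow_le' x hk1) (pow_le_one₀ (norm_nonneg x) hxn1)
  have hEyn : ‖E * y‖ ≤ 1 := by
    refine le_trans (norm_mul_le _ _) ?_
    exact mul_le_one₀ hEn1 (norm_nonneg y) hynorm
  -- step 1 : ‖c^k‖ ≥ ‖E x^k E‖ - (k-1) δ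
  have hstep1 : ‖E * x ^ k * E‖ - (k-1 : ℕ) * δ ≤ ‖c ^ k‖ := by
    have h := pow_comm_bound E x δ hEn1 hxn1 hEE hEx hδpos.le k hk1
    rw [← hcdef] at h
    have h2 : ‖E * x ^ k * E‖ - ‖c ^ k‖ ≤ ‖c ^ k - E * x ^ k * E‖ := by
      rw [norm_sub_rev]
      exact norm_sub_norm_le _ _
    linarith [h, h2]
  -- step 2 : ‖E x^k E‖ ≥ ‖y (E x^k E) y‖
  have hstep2 : ‖y * (E * x ^ k * E) * y‖ ≤ ‖E * x ^ k * E‖ := by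
    refine le_trans norm_mul₃_le ?_
    calc ‖y‖ * ‖E * x ^ k * E‖ * ‖y‖ ≤ 1 * ‖E * x ^ k * E‖ * 1 := by
          gcongr <;> exact hynorm
      _ = ‖E * x ^ k * E‖ := by ring
  -- step 3 : swap
  have hstep3 : ‖y * (E * x ^ k * E) * y - E * (y * x ^ k * y) * E‖ ≤ 2 * δ := by
    have hid : y * (E * x ^ k * E) * y - E * (y * x ^ k * y) * E
        = (y * E - E * y) * (x ^ k * (E * y)) + (E * y) * (x ^ k * (E * y - y * E)) := by
      noncomm_ring
    rw [hid]
    calc ‖(y * E - E * y) * (x ^ k * (E * y)) + (E * y) * (x ^ k * (E * y - y * E))‖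
        ≤ ‖(y * E - E * y) * (x ^ k * (E * y))‖ + ‖(E * y) * (x ^ k * (E * y - y * E))‖ :=
          norm_add_le _ _
      _ ≤ δ * (1 * 1) + 1 * (1 * δ) := by
          gcongr ?_ + ?_
          · calc ‖(y * E - E * y) * (x ^ k * (E * y))‖
                ≤ ‖y * E - E * y‖ * (‖x ^ k‖ * ‖E * y‖) := by
                  refine le_trans (norm_mul_le _ _) ?_
                  gcongr
                  exact norm_mul_le _ _
              _ ≤ δ * (1 * 1) := by
                  gcongr
                  rw [norm_sub_rev]
                  exact hEy
          · calc ‖(E * y) * (x ^ k * (E * y - y * E))‖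
                ≤ ‖E * y‖ * (‖x ^ k‖ * ‖E * y - y * E‖) := by
                  refine le_trans (norm_mul_le _ _) ?_
                  gcongr
                  exact norm_mul_le _ _
              _ ≤ 1 * (1 * δ) := by gcongr
      _ = 2 * δ := by ring
  have hstep3' : ‖E * (y * x ^ k * y) * E‖ - 2 * δ ≤ ‖y * (E * x ^ k * E) * y‖ := by
    have h2 : ‖E * (y * x ^ k * y) * E‖ - ‖y * (E * x ^ k * E) * y‖
        ≤ ‖y * (E * x ^ k * E) * y - E * (y * x ^ k * y) * E‖ := by
      rw [norm_sub_rev]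
      exact norm_sub_norm_le _ _
    linarith
  -- step 4 : conjugation and cfc inequality
  have hstep4 : ((1-θ)^k : ℝ) * κ^2 ≤ ‖E * (y * x ^ k * y) * E‖ := by
    have hkey := cfc_key x hx θ (by linarith) k
    rw [← hfdef, ← hydef] at hkey
    have hconj : ((1-θ)^k : ℝ) • (E * (y * y) * E) ≤ E * (y * x ^ k * y) * E := by
      have hd : (0:A) ≤ y * x ^ k * y - ((1-θ)^k : ℝ) • (y * y) := sub_nonneg.mpr hkey
      have hpos := star_left_conjugate_nonneg hd E
      rw [hEsa] at hpos
      have hexp : E * (y * x ^ k * y - ((1-θ)^k : ℝ) • (y * y)) * E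
          = E * (y * x ^ k * y) * E - ((1-θ)^k : ℝ) • (E * (y * y) * E) := by
        rw [mul_sub, sub_mul, mul_smul_comm, smul_mul_assoc]
      rw [hexp] at hpos
      exact sub_nonneg.mp hpos
    have h0 : (0:A) ≤ ((1-θ)^k : ℝ) • (E * (y * y) * E) := by
      have h1 : (0:A) ≤ y * y := by
        have := star_mul_self_nonneg y
        rwa [hysa.star_eq] at this
      have h2 : (0:A) ≤ E * (y * y) * E := by
        have := star_left_conjugate_nonneg h1 E
        rwa [hEsa] at this
      exact smul_nonneg (pow_nonneg (by linarith) k) h2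
    have hmono := CStarAlgebra.norm_le_norm_of_nonneg_of_le h0 hconj
    have hsmul : ‖((1-θ)^k : ℝ) • (E * (y * y) * E)‖ = (1-θ)^k * ‖E * (y * y) * E‖ := by
      rw [norm_smul, Real.norm_of_nonneg (pow_nonneg (by linarith) k)]
    have hyy : ‖E * (y * y) * E‖ = ‖y * E‖ * ‖y * E‖ := by
      have h1 : star (y * E) * (y * E) = E * (y * y) * E := by
        rw [star_mul, hEsa, hysa.star_eq]
        noncomm_ring
      rw [← h1, CStarRing.norm_star_mul_self]
    have hfinal : (1-θ)^k * (‖y*E‖ * ‖y*E‖) ≤ ‖E * (y * x ^ k * y) * E‖ := by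
      rw [← hyy, ← hsmul]
      exact hmono
    have hκ2 : κ^2 ≤ ‖y*E‖ * ‖y*E‖ := by
      have := mul_le_mul hyE hyE hκ.le (norm_nonneg _)
      calc κ^2 = κ * κ := sq κ
        _ ≤ ‖y*E‖ * ‖y*E‖ := this
    calc ((1-θ)^k : ℝ) * κ^2 ≤ (1-θ)^k * (‖y*E‖ * ‖y*E‖) := by
          apply mul_le_mul_of_nonneg_left hκ2 (pow_nonneg (by linarith) k)
      _ ≤ ‖E * (y * x ^ k * y) * E‖ := hfinal
  -- combine
  have hck : ((1-3*θ):ℝ)^k ≤ ‖c‖^k := by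
    have hkδ : ((k-1 : ℕ) : ℝ) * δ + 2 * δ ≤ M2 := by
      have h1 : ((k-1:ℕ):ℝ) ≤ (k:ℝ) - 1 + 0 := by
        rw [Nat.cast_sub hk1]
        simp
      have h2 : ((k-1:ℕ):ℝ) * δ + 2 * δ ≤ ((k:ℝ) + 1) * δ := by
        have h5 := mul_le_mul_of_nonneg_right h1 hδpos.le
        linarith only [h5, hδpos.le]
      have h3 : ((k:ℝ) + 1) * δ ≤ M2 := by
        have h4 := (le_div_iff₀ (by positivity : (0:ℝ) < (k:ℝ)+1)).mp hδM
        linarith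
      linarith
    have hchain : ((1-2*θ):ℝ)^k - M2 ≤ ‖c‖^k := by
      have hnormck : ‖c ^ k‖ = ‖c‖ ^ k := by
        rw [hkdef]
        exact norm_pow_two_pow_self c hcsa m0
      have := hstep1
      rw [hnormck] at this
      have hh : ((1-2*θ):ℝ)^k ≤ ‖E * (y * x ^ k * y) * E‖ := le_trans hpowkey (by
        calc κ^2 * (1-θ)^k = (1-θ)^k * κ^2 := by ring
          _ ≤ ‖E * (y * x ^ k * y) * E‖ := hstep4)
      have := calc ((1-2*θ):ℝ)^k - 2*δ ≤ ‖E * (y * x ^ k * y) * E‖ - 2*δ := by linarith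
        _ ≤ ‖y * (E * x ^ k * E) * y‖ := hstep3'
        _ ≤ ‖E * x ^ k * E‖ := hstep2
      linarith
    rw [hM2def] at hchain
    linarith
  have hcnorm : 1 - 3*θ ≤ ‖c‖ := by
    by_contra hcon
    push_neg at hcon
    have : ‖c‖^k < ((1-3*θ):ℝ)^k :=
      pow_lt_pow_left₀ hcon (norm_nonneg c) (Nat.one_le_iff_ne_zero.mp hk1)
    linarith
  -- assemble the conclusion
  rw [hEdef] at hcuntz
  refine ⟨e, heproj, horth, ?_, ?_, hcuntz, ?_⟩
  · intro g z hz
    exact lt_of_lt_of_le (hcomm g z (hFF' hz)) (le_trans hδ'δ (le_trans hδε hεle))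
  · intro g h
    exact lt_of_lt_of_le (hequiv g h) (le_trans hδ'δ (le_trans hδε hεle))
  · rw [← hEdef, ← hcdef]
    have h1 : 1 - ε₀ ≤ 1 - ε := by linarith
    have h2 : 1 - ε < 1 - 3*θ := by rw [hθdef]; linarith
    linarith
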